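/- Suppose for each t the descent inequality g(θ_{t+1}) ≤ g(θ_t) + (X_t/L̃)‖e_t‖ − X_t²/(2L̃) holds with X_t ≤ 2g_max and ‖e_t‖ ≤ ε²/(16 g_max), and g(θ₀) − inf g ≤ Δ. Then (1/T)∑_{t=0}^{T−1} X_t² ≤ 2L̃Δ/T + ε²/4, and in particular if T ≥ 8L̃Δ/ε² there exists t with X_t ≤ ε. -/

import Mathlib

/-- Telescoping the Frank–Wolfe descent inequality: the average of X_t² is at most
    2L̃Δ/T + ε²/4, and if T ≥ 8L̃Δ/ε² then some X_t ≤ ε. -/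
theorem frank_wolfe_telescoping (Lt gmax ε Δ ginf : ℝ)
    (hLt : 0 < Lt) (hgmax : 1 ≤ gmax) (hε : ε ∈ Set.Ioo (0:ℝ) 1) (hΔ : 0 ≤ Δ)
    (gv X E : ℕ → ℝ)
    (hXnn : ∀ t, 0 ≤ X t) (hXub : ∀ t, X t ≤ 2 * gmax)
    (hEnn : ∀ t, 0 ≤ E t) (hEub : ∀ t, E t ≤ ε^2 / (16 * gmax))
    (hdesc : ∀ t, gv (t+1) ≤ gv t + (X t / Lt) * E t - (X t)^2 / (2 * Lt))
    (hlb : ∀ t, ginf ≤ gv t) (hΔ0 : gv 0 - ginf ≤ Δ)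
    (T : ℕ) (hT : 0 < T) :
    (1 / (T:ℝ)) * ∑ t ∈ Finset.range T, (X t)^2 ≤ 2 * Lt * Δ / (T:ℝ) + ε^2 / 4 ∧
    (8 * Lt * Δ / ε^2 ≤ (T:ℝ) → ∃ t < T, X t ≤ ε) := by
  have hgm : (0:ℝ) < gmax := lt_of_lt_of_le one_pos hgmax
  have hε0 : 0 < ε := hε.1
  have hLne : Lt ≠ 0 := ne_of_gt hLt
  have hTpos : (0:ℝ) < (T:ℝ) := by exact_mod_cast hT
  have h1 : ∀ t, (X t)^2 ≤ 2*Lt*(gv t - gv (t+1)) + ε^2/4 := by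
    intro t
    have hd := mul_le_mul_of_nonneg_left (hdesc t) (by linarith : (0:ℝ) ≤ 2*Lt)
    rw [show 2*Lt*(gv t + (X t/Lt)*E t - (X t)^2/(2*Lt))
        = 2*Lt*gv t + 2*(X t*E t) - (X t)^2 from by field_simp] at hd
    have hXE : X t * E t ≤ 2*gmax * (ε^2/(16*gmax)) :=
      mul_le_mul (hXub t) (hEub t) (hEnn t) (by positivity)
    have heq : 2*gmax * (ε^2/(16*gmax)) = ε^2/8 := by field_simp; ring
    rw [heq] at hXE
    nlinarith [mul_pos hTpos (pow_pos hε0 2)]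
  have hsum := Finset.sum_le_sum (fun t (_ : t ∈ Finset.range T) => h1 t)
  rw [Finset.sum_add_distrib, ← Finset.mul_sum, Finset.sum_range_sub',
      Finset.sum_const, Finset.card_range, nsmul_eq_mul] at hsum
  have hgvT : gv 0 - gv T ≤ Δ := by have := hlb T; linarith
  have hS : ∑ t ∈ Finset.range T, (X t)^2 ≤ 2*Lt*Δ + (T:ℝ)*(ε^2/4) := by
    nlinarith [mul_pos hTpos (pow_pos hε0 2)]
  constructor
  · rw [one_div, inv_mul_le_iff₀ hTpos]
    have : (T:ℝ) * (2 * Lt * Δ / (T:ℝ) + ε^2/4) = 2*Lt*Δ + (T:ℝ)*(ε^2/4) := by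
      field_simp
    linarith
  · intro hT8
    by_contra hc
    push_neg at hc
    have h8 : 8*Lt*Δ ≤ (T:ℝ)*ε^2 := by
      have := mul_le_mul_of_nonneg_right hT8 (le_of_lt (by positivity : (0:ℝ) < ε^2))
      rwa [div_mul_cancel₀] at this
      positivity
    have hlow : ∀ t ∈ Finset.range T, ε^2 ≤ (X t)^2 := by
      intro t ht
      have := hc t (Finset.mem_range.mp ht)
      nlinarith [mul_pos hTpos (pow_pos hε0 2)]
    have := Finset.sum_le_sum hlow
    rw [Finset.sum_const, Finset.card_range, nsmul_eq_mul] at this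
    nlinarith [mul_pos hTpos (pow_pos hε0 2)]
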